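/- If λ ∈ ℂ with λ ≠ 0 and a° ∈ V satisfies T(a°) = λ·a° and a°_−(0) = 0, then a° = 0. In particular, no eigenvector of T corresponding to a nonzero eigenvalue has vanishing component a°_−(0). -/

import Mathlib

open scoped BigOperators

/-- A step of a light path (in integer lattice coordinates): the vector from `p` to `q`
is cooriented with `(1,1)` or `(-1,1)`; the zero vector counts as cooriented with any vector. -/
def LightStep (p q : ℤ × ℤ) : Prop :=
  p.2 ≤ q.2 ∧ (q.1 - p.1 = q.2 - p.2 ∨ q.1 - p.1 = -(q.2 - p.2))

/-- A light path on the lattice `εℤ²` (recorded in integer coordinates `(x/ε, t/ε)`):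
a nonempty finite sequence of lattice points, each consecutive step cooriented with
`(1,1)` or `(-1,1)`, all points except possibly the first and last lying in the strip
`0 < x ≤ L` (in real coordinates). -/
def IsLightPath (L ε : ℝ) (s : List (ℤ × ℤ)) : Prop :=
  s ≠ [] ∧ s.Chain' LightStep ∧
    ∀ z ∈ s.dropLast.tail, 0 < ε * (z.1 : ℝ) ∧ ε * (z.1 : ℝ) ≤ L

/-- The number of scatterings of a path: points counted with repetitions,
excluding the first and the last. -/
def numScatter (s : List (ℤ × ℤ)) : ℕ := s.length - 2

/-- The last step of a path, if any: the pair (second-to-last point, last point). -/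
def lastStep (s : List (ℤ × ℤ)) : Option ((ℤ × ℤ) × (ℤ × ℤ)) :=
  match s.reverse with
  | q :: r :: _ => some (r, q)
  | _ => none

/-- The last step of `s` is nonzero and cooriented with `(sgn, 1)`. -/
def LastStepDir (sgn : ℤ) (s : List (ℤ × ℤ)) : Prop :=
  ∃ a b : ℤ × ℤ, lastStep s = some (a, b) ∧ a.2 < b.2 ∧ b.1 - a.1 = sgn * (b.2 - a.2)

/-- Light paths from `src` to `dst` whose last step is nonzero and cooriented with `(sgn,1)`. -/
def PathsDir (L ε : ℝ) (src dst : ℤ × ℤ) (sgn : ℤ) : Type :=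
  {s : List (ℤ × ℤ) // IsLightPath L ε s ∧ s.head? = some src ∧ s.getLast? = some dst ∧
    LastStepDir sgn s}

/-- All light paths from `src` to `dst`. -/
def PathsAll (L ε : ℝ) (src dst : ℤ × ℤ) : Type :=
  {s : List (ℤ × ℤ) // IsLightPath L ε s ∧ s.head? = some src ∧ s.getLast? = some dst}

/-- The inner sum `a_±(x,t;τ) = ∑_s (-imε)^{ℓ(s)}` over light paths from `(0,τ)` to `(x,t)`
whose last step is nonzero and cooriented with `(±1,1)`; integer lattice coordinates. -/
noncomputable def innerAmp (m L ε : ℝ) (sgn : ℤ) (x t τ : ℤ) : ℂ :=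
  ∑' s : PathsDir L ε (0, τ) (x, t) sgn, (-(Complex.I * m * ε)) ^ numScatter s.val

/-- The wave function `a_±(x,t) = ∑_{τ<t} e^{iωτ} a_±(x,t;τ)` (real time is `ε·t`). -/
noncomputable def waveFn (ω m L ε : ℝ) (sgn : ℤ) (x t : ℤ) : ℂ :=
  ∑' τ : {τ : ℤ // τ < t},
    Complex.exp (Complex.I * ω * (ε * (τ.val : ℤ))) * innerAmp m L ε sgn x t τ.val

/-- The reflection amplitude `a(ω,m,L,ε)`: sum over all light paths from `(0,τ)` to `(0,0)`,
`τ < 0`, of `e^{iωτ}(-imε)^{ℓ(s)}`. -/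
noncomputable def reflAmp (ω m L ε : ℝ) : ℂ :=
  ∑' τ : {τ : ℤ // τ < 0},
    Complex.exp (Complex.I * ω * (ε * (τ.val : ℤ))) *
      ∑' s : PathsAll L ε (0, τ.val) (0, 0), (-(Complex.I * m * ε)) ^ numScatter s.val

/-- The reflection probability `P(ω,m,L,ε) = |a(ω,m,L,ε)|²`. -/
noncomputable def reflProb (ω m L ε : ℝ) : ℝ := ‖reflAmp ω m L ε‖ ^ 2

/-- A checker path: a light path whose every step equals `(ε,ε)` or `(-ε,ε)`
(i.e. `(±1,1)` in integer coordinates). -/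
def IsCheckerPath (L ε : ℝ) (s : List (ℤ × ℤ)) : Prop :=
  IsLightPath L ε s ∧
    s.Chain' fun p q => q.2 - p.2 = 1 ∧ (q.1 - p.1 = 1 ∨ q.1 - p.1 = -1)

/-- The list of steps of a path. -/
def pathSteps (s : List (ℤ × ℤ)) : List (ℤ × ℤ) :=
  (s.zip s.tail).map fun pq => (pq.2.1 - pq.1.1, pq.2.2 - pq.1.2)

/-- The number of turns of a path: pairs of consecutive orthogonal steps. -/
def turns (s : List (ℤ × ℤ)) : ℕ :=
  (((pathSteps s).zip (pathSteps s).tail).filter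
    fun dd => dd.1.1 * dd.2.1 + dd.1.2 * dd.2.2 == 0).length

/-- Checker paths from `src` to `dst` whose last step equals `(sgn·ε, ε)`. -/
def CheckerDir (L ε : ℝ) (src dst : ℤ × ℤ) (sgn : ℤ) : Type :=
  {s : List (ℤ × ℤ) // IsCheckerPath L ε s ∧ s.head? = some src ∧ s.getLast? = some dst ∧
    LastStepDir sgn s}

/-- Membership in the space `V` of functions `a° = (a°₋, a°₊) : εℤ → ℂ²`
vanishing outside `{0, ε, …, (N+1)ε}` where `N = L/ε`; integer coordinates. -/
def InV (N : ℤ) (a : ℤ → ℂ × ℂ) : Prop :=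
  ∀ j : ℤ, j < 0 ∨ N + 1 < j → a j = 0

/-- The transfer matrix `T`: `(b°₋(x-ε), b°₊(x+ε)) = U·(a°₋(x), a°₊(x))` for
`x = ε, …, Nε`, all other values being `0`; here `U = (1/(1+imε))·[[1,-imε],[-imε,1]]`. -/
noncomputable def transferFun (m ε : ℝ) (N : ℤ) (a : ℤ → ℂ × ℂ) : ℤ → ℂ × ℂ := fun j =>
  (if 0 ≤ j ∧ j ≤ N - 1 then
      (1 / (1 + Complex.I * m * ε)) * ((a (j + 1)).1 - Complex.I * m * ε * (a (j + 1)).2)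
    else 0,
   if 2 ≤ j ∧ j ≤ N + 1 then
      (1 / (1 + Complex.I * m * ε)) * (-(Complex.I * m * ε) * (a (j - 1)).1 + (a (j - 1)).2)
    else 0)

/-- The squared Euclidean norm on `V`. -/
noncomputable def vNormSq (N : ℤ) (a : ℤ → ℂ × ℂ) : ℝ :=
  ∑ j ∈ Finset.Icc (0 : ℤ) (N + 1),
    (‖(a j).1‖ ^ 2 + ‖(a j).2‖ ^ 2)

/-- If `T(a°) = λ·a°` with `λ ≠ 0` and `a°₋(0) = 0`, then `a° = 0`;
in particular no eigenvector of `T` with a nonzero eigenvalue has `a°₋(0) = 0`. -/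
theorem eigenvector_with_vanishing_first_component_is_zero (ω m L ε : ℝ)
    (hω : 0 < ω) (hm : 0 < m) (hL : 0 < L) (hε : 0 < ε) (hmε : m * ε < 1)
    (N : ℤ) (hN : L = N * ε) (lam : ℂ) (hlam : lam ≠ 0)
    (a : ℤ → ℂ × ℂ) (ha : InV N a) (heig : transferFun m ε N a = lam • a)
    (h0 : (a 0).1 = 0) :
    a = 0 := by
  have hc : (1 : ℂ) / (1 + Complex.I * m * ε) ≠ 0 := by
    rw [div_ne_zero_iff]
    refine ⟨one_ne_zero, fun h => ?_⟩
    have h2 : (1 + Complex.I * (m:ℂ) * (ε:ℂ)).im = m * ε := by simp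
    rw [h] at h2
    simp at h2
    rcases h2 with h2 | h2 <;> linarith
  have key1 : ∀ j : ℤ, (if 0 ≤ j ∧ j ≤ N - 1 then
      (1 / (1 + Complex.I * m * ε)) * ((a (j + 1)).1 - Complex.I * m * ε * (a (j + 1)).2)
    else 0) = lam * (a j).1 := by
    intro j
    have hj := congrFun heig j
    simp only [transferFun, Pi.smul_apply, Prod.smul_fst, Prod.smul_snd, smul_eq_mul,
      Prod.ext_iff] at hj
    exact hj.1
  have key2 : ∀ j : ℤ, (if 2 ≤ j ∧ j ≤ N + 1 then
      (1 / (1 + Complex.I * m * ε)) * (-(Complex.I * m * ε) * (a (j - 1)).1 + (a (j - 1)).2)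
    else 0) = lam * (a j).2 := by
    intro j
    have hj := congrFun heig j
    simp only [transferFun, Pi.smul_apply, Prod.smul_fst, Prod.smul_snd, smul_eq_mul,
      Prod.ext_iff] at hj
    exact hj.2
  have hA0 : ∀ j : ℤ, ¬(0 ≤ j ∧ j ≤ N - 1) → (a j).1 = 0 := by
    intro j h
    have := key1 j
    rw [if_neg h] at this
    exact ((mul_eq_zero.mp this.symm).resolve_left hlam)
  have hB0 : ∀ j : ℤ, ¬(2 ≤ j ∧ j ≤ N + 1) → (a j).2 = 0 := by
    intro j h
    have := key2 j
    rw [if_neg h] at this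
    exact ((mul_eq_zero.mp this.symm).resolve_left hlam)
  have step : ∀ n : ℕ, (a (n : ℤ)).1 = 0 ∧ (a ((n : ℤ) + 1)).2 = 0 := by
    intro n
    induction n with
    | zero =>
      refine ⟨by exact_mod_cast h0, hB0 1 ?_⟩
      rintro ⟨h1, -⟩; omega
    | succ n ih =>
      have hA : (a ((n : ℤ) + 1)).1 = 0 := by
        by_cases hr : 0 ≤ (n : ℤ) ∧ (n : ℤ) ≤ N - 1
        · have hk := key1 (n : ℤ)
          rw [if_pos hr, ih.1, mul_zero, ih.2, mul_zero, sub_zero] at hk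
          exact (mul_eq_zero.mp hk).resolve_left hc
        · apply hA0
          push_neg at hr ⊢
          intro h1
          have := hr (by positivity)
          omega
      have hB : (a ((n : ℤ) + 1 + 1)).2 = 0 := by
        by_cases hr : 2 ≤ (n : ℤ) + 2 ∧ (n : ℤ) + 2 ≤ N + 1
        · have hk := key2 ((n : ℤ) + 2)
          rw [if_pos hr] at hk
          have he : (n : ℤ) + 2 - 1 = (n : ℤ) + 1 := by ring
          rw [he, hA, mul_zero, ih.2, add_zero, mul_zero] at hk
          have := (mul_eq_zero.mp hk.symm).resolve_left hlam
          rw [show (n : ℤ) + 1 + 1 = (n : ℤ) + 2 by ring]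
          exact this
        · rw [show (n : ℤ) + 1 + 1 = (n : ℤ) + 2 by ring]
          exact hB0 _ hr
      constructor
      · rw [show ((n + 1 : ℕ) : ℤ) = (n : ℤ) + 1 by push_cast; ring]
        exact hA
      · rw [show ((n + 1 : ℕ) : ℤ) = (n : ℤ) + 1 by push_cast; ring]
        exact hB
  funext j
  rcases lt_or_ge j 0 with hj | hj
  · exact ha j (Or.inl hj)
  · obtain ⟨n, rfl⟩ : ∃ n : ℕ, j = (n : ℤ) := ⟨j.toNat, (Int.toNat_of_nonneg hj).symm⟩
    have h1 : (a (n : ℤ)).1 = 0 := (step n).1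
    have h2 : (a (n : ℤ)).2 = 0 := by
      cases n with
      | zero => exact hB0 0 (by rintro ⟨h, -⟩; omega)
      | succ k =>
        have := (step k).2
        rwa [show ((k + 1 : ℕ) : ℤ) = (k : ℤ) + 1 by push_cast; ring]
    have : a (n : ℤ) = ((a (n:ℤ)).1, (a (n:ℤ)).2) := rfl
    rw [this, h1, h2]
    rfl
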